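/- Let X = {a_1,…,a_ℓ} be a finite set of ℓ distinct points, N ≥ 2, and let w : X × X → ℝ be symmetric. Define the pairwise cost c(x_1,…,x_N) = Σ_{1 ≤ i < j ≤ N} w(x_i,x_j), the matrix C ∈ ℝ^{ℓ×ℓ} by C_{ij} = w(a_i,a_j), and for λ ∈ P_{1/N}(X) the cost coefficient c_λ := Σ_{x ∈ X^N} γ_λ(x) c(x). Then, regarding λ as the vector in ℝ^ℓ with components λ_i = λ({a_i}), one has c_λ = (N²/2) λ^T C λ − (N/2) diag(C)^T λ, where diag(C) ∈ ℝ^ℓ is the vector with entries C_{ii}. -/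

import Mathlib

open Finset

lemma count_sum {N ℓ : ℕ} (y : Fin N → Fin ℓ) (g : Fin ℓ → ℝ) :
    ∑ k : Fin N, g (y k)
      = ∑ a : Fin ℓ, ((Finset.univ.filter fun k => y k = a).card : ℝ) * g a := by
  have h : ∀ k : Fin N, g (y k) = ∑ a : Fin ℓ, if y k = a then g a else 0 := by
    intro k; simp
  simp_rw [h]
  rw [Finset.sum_comm]
  refine Finset.sum_congr rfl fun a _ => ?_
  rw [← Finset.sum_filter, Finset.sum_const, nsmul_eq_mul]

lemma pair_sum {N : ℕ} (f : Fin N → Fin N → ℝ) (hf : ∀ a b, f a b = f b a) :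
    ∑ p ∈ Finset.univ.filter (fun p : Fin N × Fin N => p.1 < p.2), f p.1 p.2
      = ((∑ i, ∑ j, f i j) - ∑ i, f i i) / 2 := by
  have hgt : ∑ p : Fin N × Fin N, (if p.1 < p.2 then f p.1 p.2 else 0)
      = ∑ p : Fin N × Fin N, (if p.2 < p.1 then f p.1 p.2 else 0) := by
    apply Fintype.sum_equiv (Equiv.prodComm (Fin N) (Fin N))
    intro p
    simp [hf p.1 p.2]
    exact if_congr Iff.rfl rfl rfl
  have hdiag : ∑ p : Fin N × Fin N, (if p.1 = p.2 then f p.1 p.2 else 0)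
      = ∑ i, f i i := by
    rw [Fintype.sum_prod_type]
    refine Finset.sum_congr rfl fun i _ => ?_
    simp
  have hsplit : ∀ p : Fin N × Fin N, f p.1 p.2
      = (if p.1 < p.2 then f p.1 p.2 else 0) + (if p.2 < p.1 then f p.1 p.2 else 0)
        + (if p.1 = p.2 then f p.1 p.2 else 0) := by
    intro p
    rcases lt_trichotomy p.1 p.2 with h | h | h
    · simp [h, asymm h, h.ne]
    · simp [h]
    · simp [h, asymm h, (ne_of_gt h)]
  have htot : ∑ i, ∑ j, f i j
      = (∑ p : Fin N × Fin N, (if p.1 < p.2 then f p.1 p.2 else 0))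
        + (∑ p : Fin N × Fin N, (if p.2 < p.1 then f p.1 p.2 else 0))
        + (∑ p : Fin N × Fin N, (if p.1 = p.2 then f p.1 p.2 else 0)) := by
    rw [← Finset.sum_add_distrib, ← Finset.sum_add_distrib]
    rw [← Fintype.sum_prod_type (f := fun p : Fin N × Fin N => f p.1 p.2)]
    exact Finset.sum_congr rfl fun p _ => hsplit p
  rw [Finset.sum_filter]
  rw [hdiag, ← hgt] at htot
  linarith

lemma c_perm {N ℓ : ℕ} (w : Fin ℓ → Fin ℓ → ℝ) (hw : ∀ a b, w a b = w b a)
    (y : Fin N → Fin ℓ) (e : Equiv.Perm (Fin N)) :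
    ∑ p ∈ Finset.univ.filter (fun p : Fin N × Fin N => p.1 < p.2),
        w ((y ∘ e) p.1) ((y ∘ e) p.2)
      = ∑ p ∈ Finset.univ.filter (fun p : Fin N × Fin N => p.1 < p.2),
        w (y p.1) (y p.2) := by
  have A := pair_sum (f := fun a b => w ((y ∘ e) a) ((y ∘ e) b)) (fun a b => hw _ _)
  have B := pair_sum (f := fun a b => w (y a) (y b)) (fun a b => hw _ _)
  rw [A, B]
  have h1 : ∑ i, ∑ j, w ((y ∘ e) i) ((y ∘ e) j) = ∑ i, ∑ j, w (y i) (y j) := by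
    have : ∀ i : Fin N, ∑ j, w (y i) ((y ∘ e) j) = ∑ j, w (y i) (y j) := by
      intro i; exact Equiv.sum_comp e (fun j => w (y i) (y j))
    calc ∑ i, ∑ j, w ((y ∘ e) i) ((y ∘ e) j)
        = ∑ i, ∑ j, w (y i) ((y ∘ e) j) :=
          Equiv.sum_comp e (fun i => ∑ j, w (y i) ((y ∘ e) j))
      _ = ∑ i, ∑ j, w (y i) (y j) := Finset.sum_congr rfl fun i _ => this i
  have h2 : ∑ i, w ((y ∘ e) i) ((y ∘ e) i) = ∑ i, w (y i) (y i) :=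
    Equiv.sum_comp e (fun i => w (y i) (y i))
  rw [h1, h2]

noncomputable def symmetrize (N ℓ : ℕ) (γ : (Fin N → Fin ℓ) → ℝ) : (Fin N → Fin ℓ) → ℝ :=
  fun x => (1 / (Nat.factorial N : ℝ)) * ∑ σ : Equiv.Perm (Fin N), γ (x ∘ σ)

def IsProbVec {α : Type*} [Fintype α] (p : α → ℝ) : Prop :=
  (∀ x, 0 ≤ p x) ∧ ∑ x, p x = 1

def IsSymmFun (N ℓ : ℕ) (γ : (Fin N → Fin ℓ) → ℝ) : Prop :=
  ∀ (σ : Equiv.Perm (Fin N)) (x : Fin N → Fin ℓ), γ (x ∘ σ) = γ x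

def PSym (N ℓ : ℕ) : Set ((Fin N → Fin ℓ) → ℝ) :=
  {γ | IsProbVec γ ∧ IsSymmFun N ℓ γ}

noncomputable def margOf (N ℓ : ℕ) (x : Fin N → Fin ℓ) : Fin ℓ → ℝ :=
  fun j => ((Finset.univ.filter fun k => x k = j).card : ℝ) / (N : ℝ)

noncomputable def QuantFinset (N ℓ : ℕ) : Finset (Fin ℓ → ℝ) :=
  Finset.image (margOf N ℓ) Finset.univ

noncomputable def gammaLam (N ℓ : ℕ) (lam : Fin ℓ → ℝ) : (Fin N → Fin ℓ) → ℝ :=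
  if h : ∃ i : Fin N → Fin ℓ, margOf N ℓ i = lam then
    symmetrize N ℓ (fun x => if x = h.choose then 1 else 0)
  else 0

noncomputable def marg1 (N ℓ : ℕ) [NeZero N] (γ : (Fin N → Fin ℓ) → ℝ) : Fin ℓ → ℝ :=
  fun j => ∑ x : Fin N → Fin ℓ, if x 0 = j then γ x else 0

noncomputable def marg2 (N ℓ : ℕ) [NeZero N] (γ : (Fin N → Fin ℓ) → ℝ) : Fin ℓ → Fin ℓ → ℝ :=
  fun j k => ∑ x : Fin N → Fin ℓ, if x 0 = j ∧ x 1 = k then γ x else 0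

noncomputable def cCoef (N ℓ : ℕ) (c : (Fin N → Fin ℓ) → ℝ) (lam : Fin ℓ → ℝ) : ℝ :=
  ∑ x : Fin N → Fin ℓ, gammaLam N ℓ lam x * c x

/-- Corollary 1 of the paper: fast cost evaluation. For a pairwise
cost built from a symmetric pair potential w, with C_{ij} = w(a_i,a_j),
c_λ = (N²/2) λᵀCλ − (N/2) diag(C)ᵀλ. -/
theorem fast_cost_evaluation (ℓ N : ℕ) [NeZero N] (hN : 2 ≤ N)
    (w : Fin ℓ → Fin ℓ → ℝ) (hw : ∀ a b, w a b = w b a)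
    (lam : Fin ℓ → ℝ) (hlam : lam ∈ QuantFinset N ℓ) :
    cCoef N ℓ
        (fun x => ∑ p ∈ Finset.univ.filter (fun p : Fin N × Fin N => p.1 < p.2),
          w (x p.1) (x p.2)) lam
      = ((N : ℝ) ^ 2 / 2) * (∑ i : Fin ℓ, ∑ j : Fin ℓ, lam i * w i j * lam j)
        - ((N : ℝ) / 2) * (∑ i : Fin ℓ, w i i * lam i) := by

  classical
  obtain ⟨i0, -, hi0⟩ := Finset.mem_image.mp hlam
  have hex : ∃ i : Fin N → Fin ℓ, margOf N ℓ i = lam := ⟨i0, hi0⟩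
  have hy : margOf N ℓ hex.choose = lam := hex.choose_spec
  set y := hex.choose with hy_def
  set c : (Fin N → Fin ℓ) → ℝ := fun x =>
    ∑ p ∈ Finset.univ.filter (fun p : Fin N × Fin N => p.1 < p.2), w (x p.1) (x p.2)
    with hc
  have hN0 : (N : ℝ) ≠ 0 := Nat.cast_ne_zero.mpr (NeZero.ne N)
  have hfac : (Nat.factorial N : ℝ) ≠ 0 := Nat.cast_ne_zero.mpr (Nat.factorial_ne_zero N)
  -- Step 1: cCoef reduces to c y
  have hstep : cCoef N ℓ c lam = c y := by
    unfold cCoef gammaLam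
    rw [dif_pos hex]
    unfold symmetrize
    have h1 : ∀ x : Fin N → Fin ℓ,
        ((1 / (Nat.factorial N : ℝ)) *
          ∑ σ : Equiv.Perm (Fin N), (if x ∘ σ = y then (1:ℝ) else 0)) * c x
          = (1 / (Nat.factorial N : ℝ)) *
            ∑ σ : Equiv.Perm (Fin N), (if x = y ∘ σ.symm then c x else 0) := by
      intro x
      have hiff : ∀ σ : Equiv.Perm (Fin N), (x ∘ σ = y) ↔ (x = y ∘ σ.symm) := by
        intro σ
        constructor
        · intro h; funext k
          have := congrFun h (σ.symm k)
          simpa using this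
        · intro h; funext k; simp [h]
      rw [mul_assoc, Finset.sum_mul]
      congr 1
      refine Finset.sum_congr rfl fun σ _ => ?_
      by_cases h : x ∘ σ = y
      · rw [if_pos h, if_pos ((hiff σ).mp h), one_mul]
      · rw [if_neg h, if_neg (fun h' => h ((hiff σ).mpr h')), zero_mul]
    calc ∑ x : Fin N → Fin ℓ,
          ((1 / (Nat.factorial N : ℝ)) *
            ∑ σ : Equiv.Perm (Fin N), (if x ∘ σ = y then (1:ℝ) else 0)) * c x
        = ∑ x : Fin N → Fin ℓ, (1 / (Nat.factorial N : ℝ)) *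
            ∑ σ : Equiv.Perm (Fin N), (if x = y ∘ σ.symm then c x else 0) :=
          Finset.sum_congr rfl fun x _ => h1 x
      _ = (1 / (Nat.factorial N : ℝ)) * ∑ σ : Equiv.Perm (Fin N),
            ∑ x : Fin N → Fin ℓ, (if x = y ∘ σ.symm then c x else 0) := by
          rw [← Finset.mul_sum, Finset.sum_comm]
      _ = (1 / (Nat.factorial N : ℝ)) * ∑ σ : Equiv.Perm (Fin N), c (y ∘ σ.symm) := by
          congr 1
          refine Finset.sum_congr rfl fun σ _ => ?_
          simp
      _ = (1 / (Nat.factorial N : ℝ)) * ∑ σ : Equiv.Perm (Fin N), c y := by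
          congr 1
          refine Finset.sum_congr rfl fun σ _ => ?_
          exact c_perm w hw y σ.symm
      _ = c y := by
          rw [Finset.sum_const, Finset.card_univ, Fintype.card_perm, Fintype.card_fin,
            nsmul_eq_mul]
          field_simp
  rw [hstep]
  -- Step 2: evaluate c y using the occupation counts
  have hcount : ∀ a : Fin ℓ,
      ((Finset.univ.filter fun k => y k = a).card : ℝ) = (N : ℝ) * lam a := by
    intro a
    have h := congrFun hy a
    unfold margOf at h
    rw [div_eq_iff hN0] at h
    rw [h]; ring
  have hdbl : ∑ i : Fin N, ∑ j : Fin N, w (y i) (y j)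
      = ∑ a : Fin ℓ, ((N : ℝ) * lam a) * ∑ b : Fin ℓ, ((N : ℝ) * lam b) * w a b := by
    have h1 : ∀ i : Fin N, ∑ j : Fin N, w (y i) (y j)
        = ∑ b : Fin ℓ, ((N : ℝ) * lam b) * w (y i) b := by
      intro i
      rw [count_sum y (fun b => w (y i) b)]
      exact Finset.sum_congr rfl fun b _ => by rw [hcount]
    calc ∑ i : Fin N, ∑ j : Fin N, w (y i) (y j)
        = ∑ i : Fin N, ∑ b : Fin ℓ, ((N : ℝ) * lam b) * w (y i) b :=
          Finset.sum_congr rfl fun i _ => h1 i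
      _ = ∑ a : Fin ℓ, ((N : ℝ) * lam a) * ∑ b : Fin ℓ, ((N : ℝ) * lam b) * w a b := by
          rw [count_sum y (fun a => ∑ b : Fin ℓ, ((N : ℝ) * lam b) * w a b)]
          exact Finset.sum_congr rfl fun a _ => by rw [hcount]
  have hdiag : ∑ i : Fin N, w (y i) (y i)
      = ∑ a : Fin ℓ, ((N : ℝ) * lam a) * w a a := by
    rw [count_sum y (fun a => w a a)]
    exact Finset.sum_congr rfl fun a _ => by rw [hcount]
  have hcy := pair_sum (f := fun a b => w (y a) (y b)) (fun a b => hw _ _)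
  have hcy' : c y = ((∑ i : Fin N, ∑ j : Fin N, w (y i) (y j))
      - ∑ i : Fin N, w (y i) (y i)) / 2 := hcy
  rw [hcy', hdbl, hdiag]
  have e1 : ∑ a : Fin ℓ, ((N : ℝ) * lam a) * ∑ b : Fin ℓ, ((N : ℝ) * lam b) * w a b
      = (N : ℝ) ^ 2 * ∑ i : Fin ℓ, ∑ j : Fin ℓ, lam i * w i j * lam j := by
    rw [Finset.mul_sum]
    refine Finset.sum_congr rfl fun a _ => ?_
    rw [Finset.mul_sum, Finset.mul_sum]
    exact Finset.sum_congr rfl fun b _ => by ring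
  have e2 : ∑ a : Fin ℓ, ((N : ℝ) * lam a) * w a a
      = (N : ℝ) * ∑ i : Fin ℓ, w i i * lam i := by
    rw [Finset.mul_sum]
    exact Finset.sum_congr rfl fun a _ => by ring
  rw [e1, e2]
  ring
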